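/- For the composition α of 3 given by parts (1,2) (i.e., 3 labeled vertices partitioned into a 1-clump and a 2-clump), the weighted count T^1_α of connected loopless genus-1 graphs whose restriction to each clump spans a tree on the clump equals 4, where each graph is counted with weight 1/|Aut|. -/
import Mathlib


variable {ι : Type} [Fintype ι] [DecidableEq ι]

/-- The vertex set: `d` labeled vertices partitioned into clumps of sizes `α i`. -/
abbrev ClumpV (α : ι → ℕ) : Type := Σ i : ι, Fin (α i)

/-- The loopless simple graph underlying a multigraph given by an edge-multiplicity
function `m` on unordered pairs of vertices. -/
def mGraph {α : ι → ℕ} (m : Sym2 (ClumpV α) → ℕ) : SimpleGraph (ClumpV α) :=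
  SimpleGraph.fromRel (fun u v => m s(u, v) ≠ 0)

/-- The set of pairs `(m, t)` where `m` is the edge-multiplicity function of a connected
loopless multigraph of genus 1 (number of edges = number of vertices) on the `d` vertices,
and `t` designates a set of `d - n` edges of it forming spanning trees on each of the
clumps. -/
def T1Set (α : ι → ℕ) :
    Set ((Sym2 (ClumpV α) → ℕ) × (Sym2 (ClumpV α) → ℕ)) :=
  { p | (∀ v : ClumpV α, p.1 s(v, v) = 0) ∧          -- loopless
        (∀ e, p.2 e ≤ p.1 e) ∧                        -- designated edges are edges
        (∀ e, p.2 e ≤ 1) ∧                            -- each pair designated at most once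
        (∑ e : Sym2 (ClumpV α), p.1 e) = Fintype.card (ClumpV α) ∧  -- genus 1 : E = V
        (mGraph p.1).Connected ∧                       -- connected
        (∀ u v : ClumpV α, u.1 ≠ v.1 → p.2 s(u, v) = 0) ∧  -- designated edges lie in clumps
        (∀ i : ι, ((mGraph p.2).induce {v : ClumpV α | v.1 = i}).IsTree) }
        -- designated edges span a tree on each clump

/-- The weight `1/|Aut|` of such a multigraph with designated edges: automorphisms fix all
vertices, so `|Aut| = ∏_e (m e - t e)!` (permutations of undesignated parallel edges). -/
noncomputable def T1wt (α : ι → ℕ)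
    (p : (Sym2 (ClumpV α) → ℕ) × (Sym2 (ClumpV α) → ℕ)) : ℚ :=
  ∏ e : Sym2 (ClumpV α), (1 : ℚ) / (Nat.factorial (p.1 e - p.2 e))

/-- `T1 α` : the `1/|Aut|`-weighted number of connected loopless genus-1 multigraphs on the
`d` labeled vertices together with a designated set of `d - n` edges forming spanning trees
on each of the clumps. -/
noncomputable def T1 (α : ι → ℕ) : ℚ := ∑ᶠ p ∈ T1Set α, T1wt α p

/-! ### Auxiliary material -/


instance mGraph.adjDecidable {α : ι → ℕ} (m : Sym2 (ClumpV α) → ℕ) :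
    DecidableRel (mGraph m).Adj :=
  fun u v => inferInstanceAs (Decidable (u ≠ v ∧ (m s(u,v) ≠ 0 ∨ m s(v,u) ≠ 0)))

instance induce.adjDecidable {W : Type} (G : SimpleGraph W) [DecidableRel G.Adj]
    (s : Set W) [DecidablePred (· ∈ s)] :
    DecidableRel (G.induce s).Adj := fun u v => inferInstanceAs (Decidable (G.Adj u.1 v.1))

abbrev V' : Type := ClumpV ![1,2]
def va : V' := ⟨0, ⟨0, by norm_num⟩⟩
def vb : V' := ⟨1, ⟨0, by norm_num⟩⟩
def vc : V' := ⟨1, ⟨1, by norm_num⟩⟩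

lemma V'_cases : ∀ v : V', v = va ∨ v = vb ∨ v = vc := by decide

lemma univ6 : (Finset.univ : Finset (Sym2 V')) =
    {s(va,va), s(vb,vb), s(vc,vc), s(va,vb), s(va,vc), s(vb,vc)} := by decide

def mk3 (x y z : ℕ) : Sym2 V' → ℕ :=
  fun e => if e = s(va,vb) then x else if e = s(va,vc) then y else if e = s(vb,vc) then z else 0

def t0 : Sym2 V' → ℕ := mk3 0 0 1

@[simp] lemma mk3_aa (x y z : ℕ) : mk3 x y z s(va,va) = 0 := by
  rw [mk3, if_neg (by decide), if_neg (by decide), if_neg (by decide)]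
@[simp] lemma mk3_bb (x y z : ℕ) : mk3 x y z s(vb,vb) = 0 := by
  rw [mk3, if_neg (by decide), if_neg (by decide), if_neg (by decide)]
@[simp] lemma mk3_cc (x y z : ℕ) : mk3 x y z s(vc,vc) = 0 := by
  rw [mk3, if_neg (by decide), if_neg (by decide), if_neg (by decide)]
@[simp] lemma mk3_ab (x y z : ℕ) : mk3 x y z s(va,vb) = x := by
  rw [mk3, if_pos rfl]
@[simp] lemma mk3_ac (x y z : ℕ) : mk3 x y z s(va,vc) = y := by
  rw [mk3, if_neg (by decide), if_pos rfl]
@[simp] lemma mk3_bc (x y z : ℕ) : mk3 x y z s(vb,vc) = z := by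
  rw [mk3, if_neg (by decide), if_neg (by decide), if_pos rfl]

lemma sym2_ext {f g : Sym2 V' → ℕ}
    (h1 : f s(va,va) = g s(va,va)) (h2 : f s(vb,vb) = g s(vb,vb))
    (h3 : f s(vc,vc) = g s(vc,vc)) (h4 : f s(va,vb) = g s(va,vb))
    (h5 : f s(va,vc) = g s(va,vc)) (h6 : f s(vb,vc) = g s(vb,vc)) : f = g := by
  funext e
  induction e using Sym2.ind with
  | _ x y =>
    rcases V'_cases x with rfl|rfl|rfl <;> rcases V'_cases y with rfl|rfl|rfl <;>
      first | assumption | (rw [Sym2.eq_swap]; assumption)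

lemma acyclic_of_card_le_two {W : Type} [Fintype W] (h : Fintype.card W ≤ 2)
    (G : SimpleGraph W) : G.IsAcyclic := by
  intro v cwalk hc
  have h3 := hc.three_le_length
  have hnd : cwalk.support.tail.Nodup := hc.support_nodup
  have hle := hnd.length_le_card
  have hl : cwalk.support.length = cwalk.length + 1 := cwalk.length_support
  have : cwalk.support.tail.length = cwalk.support.length - 1 := cwalk.support.length_tail
  omega

lemma adj_of_reachable_ne {W : Type} {G : SimpleGraph W} {x y : W}
    (h : G.Reachable x y) (hne : x ≠ y) : ∃ z, G.Adj x z := by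
  obtain ⟨w⟩ := h
  cases w with
  | nil => exact absurd rfl hne
  | cons h _ => exact ⟨_, h⟩

def p1 : (Sym2 V' → ℕ) × (Sym2 V' → ℕ) := (mk3 1 0 2, t0)
def p2 : (Sym2 V' → ℕ) × (Sym2 V' → ℕ) := (mk3 0 1 2, t0)
def p3 : (Sym2 V' → ℕ) × (Sym2 V' → ℕ) := (mk3 2 0 1, t0)
def p4 : (Sym2 V' → ℕ) × (Sym2 V' → ℕ) := (mk3 0 2 1, t0)
def p5 : (Sym2 V' → ℕ) × (Sym2 V' → ℕ) := (mk3 1 1 1, t0)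

lemma tree_cond (i : Fin 2) : ((mGraph t0).induce {v : V' | v.1 = i}).IsTree := by
  constructor
  · rw [SimpleGraph.connected_iff]
    fin_cases i
    · exact ⟨by decide, ⟨⟨va, rfl⟩⟩⟩
    · exact ⟨by decide, ⟨⟨vb, rfl⟩⟩⟩
  · apply acyclic_of_card_le_two
    fin_cases i <;> decide

lemma mem_T1Set (x y z : ℕ) (hz : 1 ≤ z) (hs : x + y + z = 3)
    (hconn : (mGraph (mk3 x y z)).Connected) : (mk3 x y z, t0) ∈ T1Set ![1,2] := by
  refine ⟨?_, ?_, ?_, ?_, hconn, ?_, ?_⟩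
  · intro v; rcases V'_cases v with rfl|rfl|rfl <;> simp
  · intro e
    induction e using Sym2.ind with
    | _ u v =>
      rcases V'_cases u with rfl|rfl|rfl <;> rcases V'_cases v with rfl|rfl|rfl <;>
        simp [t0, Sym2.eq_swap (a := vb) (b := va), Sym2.eq_swap (a := vc) (b := va),
          Sym2.eq_swap (a := vc) (b := vb)] <;> omega
  · intro e
    induction e using Sym2.ind with
    | _ u v =>
      rcases V'_cases u with rfl|rfl|rfl <;> rcases V'_cases v with rfl|rfl|rfl <;>
        simp [t0, Sym2.eq_swap (a := vb) (b := va), Sym2.eq_swap (a := vc) (b := va),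
          Sym2.eq_swap (a := vc) (b := vb)]
  · have hcard : Fintype.card (ClumpV ![1,2]) = 3 := by decide
    rw [hcard, univ6]
    rw [Finset.sum_insert (by decide), Finset.sum_insert (by decide),
      Finset.sum_insert (by decide), Finset.sum_insert (by decide),
      Finset.sum_insert (by decide), Finset.sum_singleton]
    simp; omega
  · intro u v huv
    rcases V'_cases u with rfl|rfl|rfl <;> rcases V'_cases v with rfl|rfl|rfl <;>
      simp_all [t0, Sym2.eq_swap (a := vb) (b := va), Sym2.eq_swap (a := vc) (b := va)] <;>
      exact absurd rfl huv
  · exact tree_cond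

theorem T1Set_eq : T1Set ![1,2] = {p1, p2, p3, p4, p5} := by
  ext p
  constructor
  · rintro ⟨hloop, hle, hle1, hsum, hconn, hcross, htree⟩
    -- determine t := p.2
    have taa : p.2 s(va,va) = 0 := by
      have := hle s(va,va); rw [hloop va] at this; omega
    have tbb : p.2 s(vb,vb) = 0 := by
      have := hle s(vb,vb); rw [hloop vb] at this; omega
    have tcc : p.2 s(vc,vc) = 0 := by
      have := hle s(vc,vc); rw [hloop vc] at this; omega
    have tab : p.2 s(va,vb) = 0 := hcross va vb (by decide)
    have tac : p.2 s(va,vc) = 0 := hcross va vc (by decide)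
    have tbc : p.2 s(vb,vc) ≠ 0 := by
      intro h0
      have hzero : p.2 = fun _ => 0 := by
        apply sym2_ext (g := fun _ => (0:ℕ)) <;> assumption
      have htc := (htree 1).isConnected.preconnected
        ⟨vb, rfl⟩ ⟨vc, rfl⟩
      obtain ⟨zz, hadj⟩ := adj_of_reachable_ne htc
        (by intro h; exact absurd (congrArg Subtype.val h) (by decide))
      have : (mGraph p.2).Adj vb zz.1 := hadj
      rw [hzero] at this
      exact this.2.elim (fun h => h rfl) (fun h => h rfl)
    have tbc1 : p.2 s(vb,vc) = 1 := le_antisymm (hle1 _) (Nat.one_le_iff_ne_zero.2 tbc)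
    have ht : p.2 = t0 := by
      apply sym2_ext <;> simp [t0, taa, tbb, tcc, tab, tac, tbc1]
    -- determine m := p.1
    have hcard : Fintype.card (ClumpV ![1,2]) = 3 := by decide
    rw [hcard, univ6, Finset.sum_insert (by decide), Finset.sum_insert (by decide),
      Finset.sum_insert (by decide), Finset.sum_insert (by decide),
      Finset.sum_insert (by decide), Finset.sum_singleton, hloop va, hloop vb, hloop vc]
      at hsum
    have hz : 1 ≤ p.1 s(vb,vc) := le_trans (le_of_eq tbc1.symm) (hle _)
    have hxy : p.1 s(va,vb) ≠ 0 ∨ p.1 s(va,vc) ≠ 0 := by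
      obtain ⟨z, hadj⟩ := adj_of_reachable_ne (hconn.preconnected va vb) (by decide)
      obtain ⟨hne', hm⟩ := hadj
      rcases V'_cases z with rfl|rfl|rfl
      · exact absurd rfl hne'
      · left
        rcases hm with h | h
        · exact h
        · rwa [Sym2.eq_swap] at h
      · right
        rcases hm with h | h
        · exact h
        · rwa [Sym2.eq_swap] at h
    set x := p.1 s(va,vb) with hx
    set y := p.1 s(va,vc) with hy
    set z := p.1 s(vb,vc) with hzd
    have key : (x = 1 ∧ y = 0 ∧ z = 2) ∨ (x = 0 ∧ y = 1 ∧ z = 2) ∨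
        (x = 2 ∧ y = 0 ∧ z = 1) ∨ (x = 0 ∧ y = 2 ∧ z = 1) ∨
        (x = 1 ∧ y = 1 ∧ z = 1) := by
      rcases hxy with h | h <;> omega
    have hm : ∀ x' y' z' : ℕ, x = x' → y = y' → z = z' → p.1 = mk3 x' y' z' := by
      intro x' y' z' h1 h2 h3
      apply sym2_ext <;>
        simp [hloop va, hloop vb, hloop vc, ← h1, ← h2, ← h3, hx, hy, hzd]
    have hp : p = (p.1, p.2) := rfl
    rcases key with ⟨e1,e2,e3⟩ | ⟨e1,e2,e3⟩ | ⟨e1,e2,e3⟩ | ⟨e1,e2,e3⟩ | ⟨e1,e2,e3⟩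
    · exact Or.inl (by rw [hp, hm _ _ _ e1 e2 e3, ht]; rfl)
    · exact Or.inr (Or.inl (by rw [hp, hm _ _ _ e1 e2 e3, ht]; rfl))
    · exact Or.inr (Or.inr (Or.inl (by rw [hp, hm _ _ _ e1 e2 e3, ht]; rfl)))
    · exact Or.inr (Or.inr (Or.inr (Or.inl (by rw [hp, hm _ _ _ e1 e2 e3, ht]; rfl))))
    · exact Or.inr (Or.inr (Or.inr (Or.inr (by rw [hp, hm _ _ _ e1 e2 e3, ht]; rfl))))
  · intro hp
    rcases hp with rfl | rfl | rfl | rfl | rfl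
    · exact mem_T1Set 1 0 2 (by norm_num) (by norm_num)
        (by rw [SimpleGraph.connected_iff]; exact ⟨by decide, ⟨va⟩⟩)
    · exact mem_T1Set 0 1 2 (by norm_num) (by norm_num)
        (by rw [SimpleGraph.connected_iff]; exact ⟨by decide, ⟨va⟩⟩)
    · exact mem_T1Set 2 0 1 (by norm_num) (by norm_num)
        (by rw [SimpleGraph.connected_iff]; exact ⟨by decide, ⟨va⟩⟩)
    · exact mem_T1Set 0 2 1 (by norm_num) (by norm_num)
        (by rw [SimpleGraph.connected_iff]; exact ⟨by decide, ⟨va⟩⟩)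
    · exact mem_T1Set 1 1 1 (by norm_num) (by norm_num)
        (by rw [SimpleGraph.connected_iff]; exact ⟨by decide, ⟨va⟩⟩)

lemma wt_eval (x y z : ℕ) :
    T1wt ![1,2] (mk3 x y z, t0) =
      1 / (Nat.factorial x) * (1 / (Nat.factorial y)) * (1 / (Nat.factorial (z - 1))) := by
  rw [T1wt, univ6, Finset.prod_insert (by decide), Finset.prod_insert (by decide),
    Finset.prod_insert (by decide), Finset.prod_insert (by decide),
    Finset.prod_insert (by decide), Finset.prod_singleton]
  simp [t0, Nat.factorial]
  ring

/-- For the composition `(1,2)` of `3` (a 1-clump and a 2-clump), the weighted count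
`T^1_α` of connected loopless genus-1 graphs with designated spanning trees on the clumps
equals `4`. -/
theorem T1_one_two : T1 ![1, 2] = 4 := by
  have hset : T1Set ![1,2] = (↑({p1, p2, p3, p4, p5} :
      Finset ((Sym2 V' → ℕ) × (Sym2 V' → ℕ))) : Set _) := by
    rw [T1Set_eq]; simp
  rw [T1, hset, finsum_mem_coe_finset]
  rw [Finset.sum_insert (by decide), Finset.sum_insert (by decide),
    Finset.sum_insert (by decide), Finset.sum_insert (by decide), Finset.sum_singleton]
  rw [show p1 = (mk3 1 0 2, t0) from rfl, show p2 = (mk3 0 1 2, t0) from rfl,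
    show p3 = (mk3 2 0 1, t0) from rfl, show p4 = (mk3 0 2 1, t0) from rfl,
    show p5 = (mk3 1 1 1, t0) from rfl, wt_eval, wt_eval, wt_eval, wt_eval, wt_eval]
  norm_num [Nat.factorial]
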